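/- arXiv:2603.03748 — 4 statements merged into one kernel-verified Lean document; each statement's English description precedes it below -/
import Mathlib

section
/- Let K be a positive natural number and α : Fin K → ℝ with α_k > 0 for all k, and set S = ∑_k α_k. Then ∑_k negMulLog(α_k / S) ≥ ∑_k (α_k / S) · (ψ(S + 1) − ψ(α_k + 1)). That is, for a Dirichlet posterior with parameters α, the total uncertainty (entropy of the mean probability vector α/S) is at least the aleatoric uncertainty given by the closed-form digamma expression, so the epistemic uncertainty H_epistemic = H_total − H_aleatoric is nonnegative. -/
/-- The digamma function: the logarithmic derivative of the Gamma function. -/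
noncomputable def digamma (x : ℝ) : ℝ :=
  deriv (fun t => Real.log (Real.Gamma t)) x

open Real Filter

lemma diffLogGamma {x : ℝ} (hx : 0 < x) :
    DifferentiableAt ℝ (fun t => Real.log (Real.Gamma t)) x := by
  have h1 : DifferentiableAt ℝ Real.Gamma x :=
    Real.differentiableAt_Gamma (fun m => by
      have : (0:ℝ) ≤ m := Nat.cast_nonneg m; exact ne_of_gt (by linarith))
  exact h1.log (Real.Gamma_pos_of_pos hx).ne'

lemma slope_logGamma {x : ℝ} (hx : 0 < x) :
    slope (Real.log ∘ Real.Gamma) x (x + 1) = Real.log x := by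
  rw [slope_def_field]
  have : Real.Gamma (x + 1) = x * Real.Gamma x := Real.Gamma_add_one hx.ne'
  simp only [Function.comp_apply, this]
  rw [Real.log_mul hx.ne' (Real.Gamma_pos_of_pos hx).ne']
  field_simp
  ring

lemma digamma_le_log {x : ℝ} (hx : 0 < x) : digamma x ≤ Real.log x := by
  have h := Real.convexOn_log_Gamma.deriv_le_slope (Set.mem_Ioi.mpr hx)
    (Set.mem_Ioi.mpr (by linarith : (0:ℝ) < x + 1)) (by linarith)
    (by exact diffLogGamma hx)
  rw [slope_logGamma hx] at h
  exact h

lemma log_le_digamma {x : ℝ} (hx : 0 < x) : Real.log x ≤ digamma (x + 1) := by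
  have h := Real.convexOn_log_Gamma.slope_le_deriv (Set.mem_Ioi.mpr hx)
    (Set.mem_Ioi.mpr (by linarith : (0:ℝ) < x + 1)) (by linarith)
    (by exact diffLogGamma (by linarith))
  rw [slope_logGamma hx] at h
  exact h

lemma digamma_add_one {x : ℝ} (hx : 0 < x) : digamma (x + 1) = digamma x + 1 / x := by
  have heq : (fun t => Real.log (Real.Gamma (t + 1))) =ᶠ[nhds x]
      (fun t => Real.log (Real.Gamma t) + Real.log t) := by
    filter_upwards [Ioi_mem_nhds hx] with t ht
    rw [Real.Gamma_add_one (ne_of_gt ht),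
      Real.log_mul (ne_of_gt ht) (Real.Gamma_pos_of_pos ht).ne']
    ring
  have h1 : deriv (fun t => Real.log (Real.Gamma (t + 1))) x = digamma (x + 1) := by
    exact deriv_comp_add_const (fun t => Real.log (Real.Gamma t)) 1 x
  have h2 : deriv (fun t => Real.log (Real.Gamma t) + Real.log t) x
      = digamma x + 1 / x := by
    rw [deriv_fun_add (diffLogGamma hx) (Real.differentiableAt_log hx.ne'),
      Real.deriv_log, one_div]
    rfl
  rw [← h1, heq.deriv_eq, h2]

lemma auxAnti : StrictAntiOn (fun t : ℝ => Real.log (t+1) - Real.log t - (t+1)⁻¹)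
    (Set.Ioi 0) := by
  apply strictAntiOn_of_deriv_neg (convex_Ioi 0)
  · apply ContinuousOn.sub
    apply ContinuousOn.sub
    · exact (Real.continuousOn_log.comp (by fun_prop)
        (fun t ht => by simp at ht ⊢; positivity)).congr (fun t ht => rfl)
    · exact Real.continuousOn_log.mono (fun t ht => by simp at ht ⊢; positivity)
    · exact ContinuousOn.inv₀ (by fun_prop) (fun t ht => by simp at ht; positivity)
  · intro t ht
    rw [interior_Ioi] at ht
    simp only [Set.mem_Ioi] at ht
    have ht1 : t + 1 ≠ 0 := by positivity
    have hA : HasDerivAt (fun u:ℝ => u + 1) 1 t := (hasDerivAt_id t).add_const 1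
    have hF : HasDerivAt (fun t : ℝ => Real.log (t+1) - Real.log t - (t+1)⁻¹)
        (1/(t+1) - 1/t - (-1/(t+1)^2)) t := by
      have h1 := hA.log ht1
      have h2 := Real.hasDerivAt_log ht.ne'
      have h3 := hA.inv ht1
      simpa [one_div] using (h1.fun_sub h2).fun_sub h3
    rw [hF.deriv]
    have hkey : 1/(t+1) - 1/t - (-1/(t+1)^2) = -(1/(t*(t+1)^2)) := by
      field_simp
      ring
    rw [hkey, neg_lt, neg_zero]
    positivity

lemma digamma_teles {x : ℝ} (hx : 0 < x) (n : ℕ) :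
    digamma (x + n + 1) = digamma (x + 1) + ∑ k ∈ Finset.range n, 1/(x + k + 1) := by
  induction n with
  | zero => simp
  | succ n ih =>
    have hxn : 0 < x + n + 1 := by positivity
    have : x + (n+1 : ℕ) + 1 = (x + n + 1) + 1 := by push_cast; ring
    rw [this, digamma_add_one hxn, ih, Finset.sum_range_succ]
    ring

lemma log_teles (x : ℝ) (n : ℕ) :
    ∑ k ∈ Finset.range n, (Real.log (x + k + 1) - Real.log (x + k))
      = Real.log (x + n) - Real.log x := by
  have := Finset.sum_range_sub (fun k : ℕ => Real.log (x + k)) n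
  simpa [add_assoc] using this

lemma digamma_key {a b : ℝ} (ha : 0 < a) (hab : a ≤ b) :
    digamma (b + 1) - digamma (a + 1) ≤ Real.log b - Real.log a := by
  have hb : 0 < b := lt_of_lt_of_le ha hab
  have bound : ∀ n : ℕ, digamma (b + 1) - digamma (a + 1)
      ≤ Real.log b - Real.log a + 1/(b + n) := by
    intro n
    have hbn : 0 < b + n := by positivity
    have han : 0 < a + n := by positivity
    have e1 : digamma (b + 1) - digamma (a + 1)
        = (digamma (b + n + 1) - digamma (a + n + 1))
          + ∑ k ∈ Finset.range n, (1/(a + k + 1) - 1/(b + k + 1)) := by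
      rw [digamma_teles hb n, digamma_teles ha n, Finset.sum_sub_distrib]
      ring
    have e2 : digamma (b + n + 1) - digamma (a + n + 1)
        ≤ Real.log (b + n + 1) - Real.log (a + n) :=
      sub_le_sub (digamma_le_log (by positivity)) (log_le_digamma han)
    have e3 : ∑ k ∈ Finset.range n, (1/(a + k + 1) - 1/(b + k + 1))
        ≤ ∑ k ∈ Finset.range n, ((Real.log (a + k + 1) - Real.log (a + k))
            - (Real.log (b + k + 1) - Real.log (b + k))) := by
      apply Finset.sum_le_sum
      intro k _
      have hak : 0 < a + k := by positivity
      have hbk : (a : ℝ) + k ≤ b + k := by linarith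
      rcases eq_or_lt_of_le hbk with h | h
      · rw [h]; simp
      · have := auxAnti (Set.mem_Ioi.mpr hak) (Set.mem_Ioi.mpr (by positivity)) h
        simp only at this
        simp only [one_div]
        linarith [this]
    have e4 : ∑ k ∈ Finset.range n, ((Real.log (a + k + 1) - Real.log (a + k))
            - (Real.log (b + k + 1) - Real.log (b + k)))
        = (Real.log (a + n) - Real.log a) - (Real.log (b + n) - Real.log b) := by
      rw [Finset.sum_sub_distrib, log_teles, log_teles]
    have e5 : Real.log (b + n + 1) - Real.log (b + n) ≤ 1/(b + n) := by
      have h1 : Real.log ((b + n + 1)/(b + n)) ≤ (b + n + 1)/(b + n) - 1 :=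
        Real.log_le_sub_one_of_pos (by positivity)
      rw [Real.log_div (by positivity) hbn.ne'] at h1
      have h2 : (b + n + 1)/(b + n) - 1 = 1/(b + n) := by field_simp; ring
      linarith
    calc digamma (b + 1) - digamma (a + 1)
        ≤ (Real.log (b + n + 1) - Real.log (a + n))
          + ((Real.log (a + n) - Real.log a) - (Real.log (b + n) - Real.log b)) := by
          rw [e1]; exact add_le_add e2 (e4 ▸ e3)
      _ = Real.log b - Real.log a + (Real.log (b + n + 1) - Real.log (b + n)) := by ring
      _ ≤ Real.log b - Real.log a + 1/(b + n) := by linarith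
  have hlim : Tendsto (fun n : ℕ => Real.log b - Real.log a + 1/(b + n)) atTop
      (nhds (Real.log b - Real.log a + 0)) := by
    apply tendsto_const_nhds.add
    simp only [one_div]
    exact (tendsto_atTop_add_const_left atTop b tendsto_natCast_atTop_atTop).inv_tendsto_atTop
  have := ge_of_tendsto' hlim bound
  linarith

/-- **Total uncertainty dominates aleatoric uncertainty (Dirichlet posterior).**
For a Dirichlet posterior with parameters `α` (all positive) and `S = ∑ k, α k`, the
total uncertainty `H_total = ∑ k, negMulLog (α k / S)` (entropy of the mean probability
vector) is at least the closed-form aleatoric uncertainty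
`H_aleatoric = ∑ k, (α k / S) * (ψ(S+1) − ψ(α k + 1))`; hence the epistemic uncertainty
`H_total − H_aleatoric` is nonnegative. -/
theorem total_ge_aleatoric (K : ℕ) (hK : 0 < K) (α : Fin K → ℝ)
    (hα : ∀ k, 0 < α k) :
    ∑ k, (α k / ∑ j, α j) * (digamma ((∑ j, α j) + 1) - digamma (α k + 1)) ≤
      ∑ k, Real.negMulLog (α k / ∑ j, α j) := by
  have : Nonempty (Fin K) := Fin.pos_iff_nonempty.mp hK
  set S := ∑ j, α j with hSdef
  have hS : 0 < S := Finset.sum_pos (fun i _ => hα i) Finset.univ_nonempty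
  apply Finset.sum_le_sum
  intro k _
  have hk := hα k
  have hkS : α k ≤ S :=
    Finset.single_le_sum (fun i _ => (hα i).le) (Finset.mem_univ k)
  have hmul : negMulLog (α k / S) = (α k / S) * (Real.log S - Real.log (α k)) := by
    rw [Real.negMulLog, Real.log_div hk.ne' hS.ne']
    ring
  rw [hmul]
  exact mul_le_mul_of_nonneg_left (digamma_key hk hkS) (by positivity)
end

section
/- For all real numbers a > 0 and b > 0, the integral ∫_0^1 x^{a−1} · (1−x)^{b−1} · log(x) dx equals (Γ(a)·Γ(b)/Γ(a+b)) · (ψ(a) − ψ(a+b)), where Γ is the real Gamma function. (Differentiated Beta-integral identity underlying the analytical aleatoric uncertainty formula.) -/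
open MeasureTheory Real Set intervalIntegral

/-- The complex beta integrand agrees with the real one on `[0,1]`. -/
lemma beta_integrand_ofReal (s t : ℝ) {x : ℝ} (hx : 0 ≤ x) (hx1 : x ≤ 1) :
    (x : ℂ) ^ ((s : ℂ) - 1) * (1 - (x : ℂ)) ^ ((t : ℂ) - 1) =
      ((x ^ (s - 1) * (1 - x) ^ (t - 1) : ℝ) : ℂ) := by
  rw [Complex.ofReal_mul, Complex.ofReal_cpow hx, Complex.ofReal_cpow (by linarith)]
  push_cast
  ring_nf

lemma beta_integrable {s t : ℝ} (hs : 0 < s) (ht : 0 < t) :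
    IntervalIntegrable (fun x : ℝ => x ^ (s - 1) * (1 - x) ^ (t - 1)) volume 0 1 := by
  have hc := Complex.betaIntegral_convergent (u := s) (v := t) (by simpa) (by simpa)
  rw [intervalIntegrable_iff] at hc ⊢
  have := hc.re
  refine this.congr ?_
  rw [uIoc_of_le (zero_le_one)]
  filter_upwards [ae_restrict_mem measurableSet_Ioc] with x hx
  rw [beta_integrand_ofReal s t hx.1.le hx.2]
  simp

lemma beta_eval {s t : ℝ} (hs : 0 < s) (ht : 0 < t) :
    ∫ x in (0:ℝ)..1, x ^ (s - 1) * (1 - x) ^ (t - 1) =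
      Real.Gamma s * Real.Gamma t / Real.Gamma (s + t) := by
  have hc := Complex.Gamma_mul_Gamma_eq_betaIntegral (s := s) (t := t) (by simpa) (by simpa)
  have hbeta : Complex.betaIntegral s t =
      ((∫ x in (0:ℝ)..1, x ^ (s - 1) * (1 - x) ^ (t - 1) : ℝ) : ℂ) := by
    rw [Complex.betaIntegral, ← intervalIntegral.integral_ofReal]
    refine intervalIntegral.integral_congr fun x hx => ?_
    rw [uIcc_of_le zero_le_one] at hx
    exact beta_integrand_ofReal s t hx.1 hx.2
  rw [hbeta, ← Complex.ofReal_add, Complex.Gamma_ofReal, Complex.Gamma_ofReal,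
    Complex.Gamma_ofReal, ← Complex.ofReal_mul, ← Complex.ofReal_mul] at hc
  have := Complex.ofReal_inj.mp hc
  have hne : Real.Gamma (s + t) ≠ 0 := (Real.Gamma_pos_of_pos (by linarith)).ne'
  field_simp
  linarith [this]

lemma hasDerivAt_Gamma_of_pos {x : ℝ} (hx : 0 < x) :
    HasDerivAt Real.Gamma (deriv Real.Gamma x) x := by
  refine (Real.differentiableAt_Gamma ?_).hasDerivAt
  intro m
  have : (0:ℝ) ≤ m := m.cast_nonneg
  intro h; rw [h] at hx; linarith

lemma digamma_eq {x : ℝ} (hx : 0 < x) :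
    digamma x = deriv Real.Gamma x / Real.Gamma x := by
  have hΓ : Real.Gamma x ≠ 0 := (Real.Gamma_pos_of_pos hx).ne'
  have h : HasDerivAt (fun t => Real.log (Real.Gamma t))
      ((Real.Gamma x)⁻¹ * deriv Real.Gamma x) x :=
    (Real.hasDerivAt_log hΓ).comp x (hasDerivAt_Gamma_of_pos hx)
  rw [digamma, h.deriv, inv_mul_eq_div]

/-- **Differentiated Beta-integral identity.** For all `a, b > 0`,
`∫_0^1 x^{a−1} (1−x)^{b−1} log x dx = (Γ(a)Γ(b)/Γ(a+b)) · (ψ(a) − ψ(a+b))`. -/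
theorem integral_beta_log (a b : ℝ) (ha : 0 < a) (hb : 0 < b) :
    ∫ x in (0:ℝ)..1, x ^ (a - 1) * (1 - x) ^ (b - 1) * Real.log x =
      (Real.Gamma a * Real.Gamma b / Real.Gamma (a + b)) *
        (digamma a - digamma (a + b)) := by
  set F : ℝ → ℝ → ℝ := fun t x => x ^ (t - 1) * (1 - x) ^ (b - 1) with hF
  set F' : ℝ → ℝ → ℝ := fun t x => x ^ (t - 1) * (1 - x) ^ (b - 1) * Real.log x with hF'
  -- differentiation under the integral sign
  have key := intervalIntegral.hasDerivAt_integral_of_dominated_loc_of_deriv_le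
    (𝕜 := ℝ) (μ := volume) (F := F) (F' := F') (x₀ := a) (a := 0) (b := 1)
    (s := Metric.ball a (a / 2)) (bound := fun x => (4 / a) * (x ^ (a / 4 - 1) * (1 - x) ^ (b - 1)))
    (Metric.ball_mem_nhds a (by positivity))
    (Filter.Eventually.of_forall fun t =>
      (by fun_prop : Measurable fun x : ℝ => x ^ (t - 1) * (1 - x) ^ (b - 1)).aestronglyMeasurable)
    (beta_integrable ha hb)
    (((by fun_prop : Measurable fun x : ℝ => x ^ (a - 1) * (1 - x) ^ (b - 1)).mul
      Real.measurable_log).aestronglyMeasurable)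
    ?_ ((beta_integrable (by positivity : (0:ℝ) < a / 4) hb).const_mul _) ?_
  · obtain ⟨hint, hderiv⟩ := key
    -- the integral function agrees with the Gamma quotient near `a`
    have heq : (fun t => ∫ x in (0:ℝ)..1, F t x) =ᶠ[nhds a]
        (fun t => Real.Gamma t * Real.Gamma b / Real.Gamma (t + b)) := by
      filter_upwards [eventually_gt_nhds ha] with t ht
      exact beta_eval ht hb
    have hG : HasDerivAt (fun t => Real.Gamma t * Real.Gamma b / Real.Gamma (t + b))
        (∫ x in (0:ℝ)..1, F' a x) a := hderiv.congr_of_eventuallyEq heq.symm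
    -- compute the derivative of the Gamma quotient
    have hab : 0 < a + b := by linarith
    have h1 : HasDerivAt Real.Gamma (deriv Real.Gamma a) a := hasDerivAt_Gamma_of_pos ha
    have h2 : HasDerivAt (fun t => Real.Gamma (t + b)) (deriv Real.Gamma (a + b)) a := by
      have := (hasDerivAt_Gamma_of_pos hab).comp a ((hasDerivAt_id a).add_const b)
      rw [mul_one] at this
      exact this
    have hΓab : Real.Gamma (a + b) ≠ 0 := (Real.Gamma_pos_of_pos hab).ne'
    have hΓa : Real.Gamma a ≠ 0 := (Real.Gamma_pos_of_pos ha).ne'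
    have hG2 : HasDerivAt (fun t => Real.Gamma t * Real.Gamma b / Real.Gamma (t + b))
        ((deriv Real.Gamma a * Real.Gamma b * Real.Gamma (a + b) -
          Real.Gamma a * Real.Gamma b * deriv Real.Gamma (a + b)) /
          Real.Gamma (a + b) ^ 2) a := (h1.mul_const _).div h2 hΓab
    have huniq := hG.unique hG2
    rw [show (∫ x in (0:ℝ)..1, x ^ (a - 1) * (1 - x) ^ (b - 1) * Real.log x)
        = ∫ x in (0:ℝ)..1, F' a x from rfl, huniq, digamma_eq ha, digamma_eq hab]
    field_simp
  · -- bound on the derivative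
    refine Filter.Eventually.of_forall fun x hx t ht => ?_
    rw [uIoc_of_le zero_le_one] at hx
    obtain ⟨hx0, hx1⟩ := hx
    have hq : (0:ℝ) ≤ (1 - x) ^ (b - 1) := Real.rpow_nonneg (by linarith) _
    have ht' : a / 2 - 1 ≤ t - 1 := by
      have := abs_lt.mp (by simpa [Real.dist_eq] using Metric.mem_ball.mp ht)
      linarith [this.1]
    have h2 : x ^ (t - 1) ≤ x ^ (a / 2 - 1) :=
      Real.rpow_le_rpow_of_exponent_ge hx0 hx1 ht'
    have h1 : |Real.log x| ≤ (4 / a) * x ^ (-(a / 4)) := by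
      have hlog : Real.log x ≤ 0 := Real.log_nonpos hx0.le hx1
      rw [abs_of_nonpos hlog]
      have := Real.log_le_rpow_div (x := x⁻¹) (by positivity) (by positivity : (0:ℝ) < a / 4)
      rw [Real.log_inv, Real.inv_rpow hx0.le, ← Real.rpow_neg hx0.le] at this
      calc -Real.log x ≤ x ^ (-(a / 4)) / (a / 4) := this
        _ = (4 / a) * x ^ (-(a / 4)) := by field_simp
    have hnorm : ‖F' t x‖ = x ^ (t - 1) * (1 - x) ^ (b - 1) * |Real.log x| := by
      rw [hF', Real.norm_eq_abs, abs_mul, abs_mul,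
        abs_of_nonneg (Real.rpow_nonneg hx0.le _), abs_of_nonneg hq]
    have hx2 : x ^ (t - 1) * (1 - x) ^ (b - 1) ≤ x ^ (a / 2 - 1) * (1 - x) ^ (b - 1) :=
      mul_le_mul_of_nonneg_right h2 hq
    have hrw : (4 / a) * (x ^ (a / 4 - 1) * (1 - x) ^ (b - 1)) =
        x ^ (a / 2 - 1) * (1 - x) ^ (b - 1) * ((4 / a) * x ^ (-(a / 4))) := by
      rw [show x ^ (a / 4 - 1) = x ^ (a / 2 - 1) * x ^ (-(a / 4)) by
        rw [← Real.rpow_add hx0]; ring_nf]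
      ring
    have hle : x ^ (t - 1) * (1 - x) ^ (b - 1) * |Real.log x| ≤
        4 / a * (x ^ (a / 4 - 1) * (1 - x) ^ (b - 1)) := by
      rw [hrw]; exact mul_le_mul hx2 h1 (abs_nonneg _) (by positivity)
    simpa [hnorm] using hle
  · -- differentiability in the parameter
    refine Filter.Eventually.of_forall fun x hx t _ => ?_
    rw [uIoc_of_le zero_le_one] at hx
    have hx0 : 0 < x := hx.1
    have hd : HasDerivAt (fun t : ℝ => x ^ (t - 1)) (x ^ (t - 1) * Real.log x) t := by
      have := (Real.hasStrictDerivAt_const_rpow hx0 (t - 1)).hasDerivAt.comp t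
        ((hasDerivAt_id t).sub_const 1)
      rw [mul_one] at this
      exact this
    have := hd.mul_const ((1 - x) ^ (b - 1))
    convert this using 1
    · rfl
    ring
end

section
/- For all real numbers a > 0 and b > 0, the expected Shannon entropy of a Beta(a, b)-distributed probability p (viewed as the two-class probability vector (p, 1−p)) has the closed form: (Γ(a+b)/(Γ(a)·Γ(b))) · ∫_0^1 x^{a−1}(1−x)^{b−1} · (negMulLog(x) + negMulLog(1−x)) dx = (a/(a+b))·(ψ(a+b+1) − ψ(a+1)) + (b/(a+b))·(ψ(a+b+1) − ψ(b+1)). (This is the K = 2 case of the analytical aleatoric uncertainty formula H_aleatoric = ∑_k (α_k/S)(ψ(S+1) − ψ(α_k+1)) for Dirichlet parameters α, S = ∑_k α_k.) -/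
open MeasureTheory Set Filter Metric

/-- Integrability of the real Beta integrand. -/
lemma betaIntegrable {s t : ℝ} (hs : 0 < s) (ht : 0 < t) :
    IntegrableOn (fun x : ℝ => x ^ (s-1) * (1-x) ^ (t-1)) (Ioc 0 1) := by
  have h := (Complex.betaIntegral_convergent (u := (s:ℂ)) (v := (t:ℂ))
    (by simpa using hs) (by simpa using ht)).1
  have h2 : IntegrableOn (fun x : ℝ => (((x:ℂ) ^ ((s:ℂ)-1) * (1-(x:ℂ)) ^ ((t:ℂ)-1))).re) (Ioc 0 1) := h.re
  apply h2.congr_fun _ measurableSet_Ioc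
  intro x hx
  have hx0 : (0:ℝ) ≤ x := hx.1.le
  have hx1 : (0:ℝ) ≤ 1 - x := by linarith [hx.2]
  simp only [Function.comp]
  rw [show ((s:ℂ) - 1) = ((s - 1 : ℝ) : ℂ) by push_cast; ring,
      show ((t:ℂ) - 1) = ((t - 1 : ℝ) : ℂ) by push_cast; ring,
      show ((1:ℂ) - (x:ℝ)) = (((1 - x : ℝ)) : ℂ) by push_cast; ring,
      ← Complex.ofReal_cpow hx0, ← Complex.ofReal_cpow hx1, ← Complex.ofReal_mul]
  simp

/-- Value of the real Beta integral. -/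
lemma betaValue {s t : ℝ} (hs : 0 < s) (ht : 0 < t) :
    ∫ x in Ioc (0:ℝ) 1, x ^ (s-1) * (1-x) ^ (t-1)
      = Real.Gamma s * Real.Gamma t / Real.Gamma (s+t) := by
  have h := Complex.Gamma_mul_Gamma_eq_betaIntegral (s := (s:ℂ)) (t := (t:ℂ))
    (by simpa using hs) (by simpa using ht)
  have hB : Complex.betaIntegral (s:ℂ) (t:ℂ)
      = ((∫ x in Ioc (0:ℝ) 1, x ^ (s-1) * (1-x) ^ (t-1) : ℝ) : ℂ) := by
    rw [Complex.betaIntegral, intervalIntegral.integral_of_le zero_le_one]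
    have heq : ∀ x ∈ Ioc (0:ℝ) 1,
        (x:ℂ) ^ ((s:ℂ)-1) * (1-(x:ℂ)) ^ ((t:ℂ)-1) = ((x ^ (s-1) * (1-x)^(t-1) : ℝ) : ℂ) := by
      intro x hx
      have hx0 : (0:ℝ) ≤ x := hx.1.le
      have hx1 : (0:ℝ) ≤ 1 - x := by linarith [hx.2]
      rw [show ((s:ℂ) - 1) = ((s - 1 : ℝ) : ℂ) by push_cast; ring,
          show ((t:ℂ) - 1) = ((t - 1 : ℝ) : ℂ) by push_cast; ring,
          show ((1:ℂ) - (x:ℝ)) = (((1 - x : ℝ)) : ℂ) by push_cast; ring,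
          ← Complex.ofReal_cpow hx0, ← Complex.ofReal_cpow hx1, ← Complex.ofReal_mul]
    rw [setIntegral_congr_fun measurableSet_Ioc heq]
    exact _root_.integral_ofReal
  rw [hB, ← Complex.ofReal_add, Complex.Gamma_ofReal, Complex.Gamma_ofReal,
      Complex.Gamma_ofReal, ← Complex.ofReal_mul, ← Complex.ofReal_mul] at h
  have := Complex.ofReal_injective h
  have hΓ : Real.Gamma (s + t) ≠ 0 := (Real.Gamma_pos_of_pos (by linarith)).ne'
  field_simp
  linarith [this]

lemma hasDerivAt_Gamma_digamma {y : ℝ} (hy : 0 < y) :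
    HasDerivAt Real.Gamma (digamma y * Real.Gamma y) y := by
  have hne : ∀ m : ℕ, y ≠ -(m:ℝ) := by
    intro m
    have h1 : -(m:ℝ) ≤ 0 := neg_nonpos.mpr (Nat.cast_nonneg m)
    exact ne_of_gt (lt_of_le_of_lt h1 hy)
  have hΓpos : 0 < Real.Gamma y := Real.Gamma_pos_of_pos hy
  have hΓ : HasDerivAt Real.Gamma (deriv Real.Gamma y) y :=
    (Real.differentiableAt_Gamma hne).hasDerivAt
  have hlog : HasDerivAt (fun t => Real.log (Real.Gamma t))
      (deriv Real.Gamma y / Real.Gamma y) y := hΓ.log hΓpos.ne'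
  have hψ : digamma y = deriv Real.Gamma y / Real.Gamma y := hlog.deriv
  rw [hψ, div_mul_cancel₀ _ hΓpos.ne']
  exact hΓ


lemma betaLog {s t : ℝ} (hs : 0 < s) (ht : 0 < t) :
    IntegrableOn (fun x : ℝ => x ^ (s-1) * Real.log x * (1-x) ^ (t-1)) (Ioc 0 1) ∧
    ∫ x in Ioc (0:ℝ) 1, x ^ (s-1) * Real.log x * (1-x) ^ (t-1)
      = (Real.Gamma s * Real.Gamma t / Real.Gamma (s+t)) * (digamma s - digamma (s+t)) := by
  have hε : (0:ℝ) < s/2 := by positivity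
  have hmeas : ∀ u : ℝ, AEStronglyMeasurable (fun x : ℝ => x ^ (u-1) * (1-x) ^ (t-1))
      (volume.restrict (Ioc (0:ℝ) 1)) := by
    intro u
    apply Measurable.aestronglyMeasurable
    exact (measurable_id.pow_const _).mul ((measurable_const.sub measurable_id).pow_const _)
  have hmeas' : AEStronglyMeasurable (fun x : ℝ => x ^ (s-1) * Real.log x * (1-x) ^ (t-1))
      (volume.restrict (Ioc (0:ℝ) 1)) := by
    apply Measurable.aestronglyMeasurable
    exact ((measurable_id.pow_const _).mul Real.measurable_log).mul
      ((measurable_const.sub measurable_id).pow_const _)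
  have h_bound : ∀ᵐ x ∂(volume.restrict (Ioc (0:ℝ) 1)), ∀ u ∈ ball s (s/2),
      ‖x ^ (u-1) * Real.log x * (1-x) ^ (t-1)‖ ≤ (4/s) * (x ^ (s/4-1) * (1-x) ^ (t-1)) := by
    rw [ae_restrict_iff' measurableSet_Ioc]
    refine ae_of_all _ fun x hx u hu => ?_
    have hx0 : 0 < x := hx.1
    have hx1 : x ≤ 1 := hx.2
    have h1x : (0:ℝ) ≤ 1 - x := by linarith
    have hlog : Real.log x ≤ 0 := Real.log_nonpos hx0.le hx1
    have hu' : s/2 - 1 ≤ u - 1 := by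
      have := abs_lt.mp (mem_ball_iff_norm.mp hu)
      linarith [this.1]
    rw [norm_mul, norm_mul, Real.norm_eq_abs, Real.norm_eq_abs, Real.norm_eq_abs,
        abs_of_nonneg (Real.rpow_nonneg hx0.le _), abs_of_nonneg (Real.rpow_nonneg h1x _),
        abs_of_nonpos hlog]
    have key : x ^ (u-1) * (-Real.log x) ≤ (4/s) * x ^ (s/4-1) := by
      have e1 : x ^ (u-1) ≤ x ^ (s/2-1) := Real.rpow_le_rpow_of_exponent_ge hx0 hx1 hu'
      have e2 : -Real.log x ≤ (4/s) * x ^ (-(s/4)) := by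
        have h3 := Real.add_one_le_exp (-(s/4) * Real.log x)
        rw [show x ^ (-(s/4)) = Real.exp (-(s/4) * Real.log x) by
          rw [Real.rpow_def_of_pos hx0, mul_comm]]
        have h4 : -(s/4) * Real.log x ≤ Real.exp (-(s/4) * Real.log x) := by linarith
        have h5 := mul_le_mul_of_nonneg_left h4 (le_of_lt (by positivity : (0:ℝ) < 4/s))
        calc -Real.log x = (4/s) * (-(s/4) * Real.log x) := by field_simp
          _ ≤ (4/s) * Real.exp (-(s/4) * Real.log x) := h5
      calc x ^ (u-1) * (-Real.log x) ≤ x ^ (s/2-1) * ((4/s) * x ^ (-(s/4))) :=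
            mul_le_mul e1 e2 (by linarith [Real.log_nonpos hx0.le hx1])
              (Real.rpow_nonneg hx0.le _)
        _ = (4/s) * (x ^ (s/2-1) * x ^ (-(s/4))) := by ring
        _ = (4/s) * x ^ (s/4-1) := by
            rw [← Real.rpow_add hx0]
            congr 1
            ring
    calc x ^ (u-1) * (-Real.log x) * (1-x) ^ (t-1)
        ≤ (4/s) * x ^ (s/4-1) * (1-x) ^ (t-1) :=
          mul_le_mul_of_nonneg_right key (Real.rpow_nonneg h1x _)
      _ = (4/s) * (x ^ (s/4-1) * (1-x) ^ (t-1)) := by ring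
  have bound_int : Integrable (fun x : ℝ => (4/s) * (x ^ (s/4-1) * (1-x) ^ (t-1)))
      (volume.restrict (Ioc (0:ℝ) 1)) :=
    (betaIntegrable (by positivity) ht).const_mul _
  have h_diff : ∀ᵐ x ∂(volume.restrict (Ioc (0:ℝ) 1)), ∀ u ∈ ball s (s/2),
      HasDerivAt (fun u => x ^ (u-1) * (1-x) ^ (t-1))
        (x ^ (u-1) * Real.log x * (1-x) ^ (t-1)) u := by
    rw [ae_restrict_iff' measurableSet_Ioc]
    refine ae_of_all _ fun x hx u _ => ?_
    have hx0 : 0 < x := hx.1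
    have h1 : HasDerivAt (fun y : ℝ => x ^ y) (x ^ (u-1) * Real.log x) (u-1) :=
      (Real.hasStrictDerivAt_const_rpow hx0 (u-1)).hasDerivAt
    have h2 : HasDerivAt (fun u : ℝ => x ^ (u-1)) (x ^ (u-1) * Real.log x) u := by
      simpa [Function.comp_def] using h1.comp u ((hasDerivAt_id u).sub_const 1)
    exact h2.mul_const _
  have key := hasDerivAt_integral_of_dominated_loc_of_deriv_le
    (μ := volume.restrict (Ioc (0:ℝ) 1)) (x₀ := s)
    (F := fun u x => x ^ (u-1) * (1-x) ^ (t-1))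
    (F' := fun u x => x ^ (u-1) * Real.log x * (1-x) ^ (t-1))
    (bound := fun x => (4/s) * (x ^ (s/4-1) * (1-x) ^ (t-1)))
    (ball_mem_nhds s hε) (Eventually.of_forall hmeas) (betaIntegrable hs ht) hmeas' h_bound bound_int h_diff
  refine ⟨key.1, ?_⟩
  have hst : 0 < s + t := by linarith
  have hΓst : Real.Gamma (s+t) ≠ 0 := (Real.Gamma_pos_of_pos hst).ne'
  have hG : HasDerivAt (fun u => Real.Gamma u * Real.Gamma t / Real.Gamma (u + t))
      ((Real.Gamma s * Real.Gamma t / Real.Gamma (s+t)) * (digamma s - digamma (s+t))) s := by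
    have h1 : HasDerivAt (fun u : ℝ => Real.Gamma u * Real.Gamma t)
        (digamma s * Real.Gamma s * Real.Gamma t) s :=
      (hasDerivAt_Gamma_digamma hs).mul_const _
    have h2 : HasDerivAt (fun u : ℝ => Real.Gamma (u + t))
        (digamma (s+t) * Real.Gamma (s+t) * 1) s :=
      by have h := (hasDerivAt_Gamma_digamma hst).comp s ((hasDerivAt_id s).add_const t); simpa [Function.comp_def] using h
    have := h1.div h2 hΓst
    refine this.congr_deriv ?_
    have hΓs : Real.Gamma s ≠ 0 := (Real.Gamma_pos_of_pos hs).ne'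
    field_simp
  have hBG : (fun u => ∫ x in Ioc (0:ℝ) 1, x ^ (u-1) * (1-x) ^ (t-1)) =ᶠ[nhds s]
      (fun u => Real.Gamma u * Real.Gamma t / Real.Gamma (u + t)) := by
    filter_upwards [Ioi_mem_nhds hs] with u hu
    exact betaValue hu ht
  have hB : HasDerivAt (fun u => ∫ x in Ioc (0:ℝ) 1, x ^ (u-1) * (1-x) ^ (t-1))
      ((Real.Gamma s * Real.Gamma t / Real.Gamma (s+t)) * (digamma s - digamma (s+t))) s :=
    hG.congr_of_eventuallyEq hBG
  exact key.2.unique hB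

/-- **Analytical aleatoric uncertainty, `K = 2` (Beta) case.** For `a, b > 0`, the
expected Shannon entropy of the two-class probability vector `(p, 1−p)` with
`p ∼ Beta(a, b)` has the closed form
`(a/(a+b))(ψ(a+b+1) − ψ(a+1)) + (b/(a+b))(ψ(a+b+1) − ψ(b+1))`. -/
theorem beta_expected_entropy (a b : ℝ) (ha : 0 < a) (hb : 0 < b) :
    (Real.Gamma (a + b) / (Real.Gamma a * Real.Gamma b)) *
        ∫ x in (0:ℝ)..1, x ^ (a - 1) * (1 - x) ^ (b - 1) *
          (Real.negMulLog x + Real.negMulLog (1 - x)) =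
      (a / (a + b)) * (digamma (a + b + 1) - digamma (a + 1)) +
        (b / (a + b)) * (digamma (a + b + 1) - digamma (b + 1)) := by
  have hab : (0:ℝ) < a + b := by linarith
  have hI1 := betaLog (s := a+1) (t := b) (by linarith) hb
  have hI2 := betaLog (s := b+1) (t := a) (by linarith) ha
  simp only [show a+1-1 = a from by ring, show a+1+b = a+b+1 from by ring] at hI1
  simp only [show b+1-1 = b from by ring, show b+1+a = a+b+1 from by ring] at hI2
  -- integrability of the reflected second piece
  have j2' : IntervalIntegrable (fun y : ℝ => y ^ b * Real.log y * (1-y) ^ (a-1)) volume 0 1 :=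
    (intervalIntegrable_iff_integrableOn_Ioc_of_le zero_le_one).2 hI2.1
  have hfun : (fun x : ℝ => (1-x) ^ b * Real.log (1-x) * (1-(1-x)) ^ (a-1))
      = fun x : ℝ => x ^ (a-1) * Real.log (1-x) * (1-x) ^ b := by
    funext x
    simp only [sub_sub_cancel]
    ring
  have j2 : IntegrableOn (fun x : ℝ => x ^ (a-1) * Real.log (1-x) * (1-x) ^ b) (Ioc 0 1) := by
    have h := j2'.comp_sub_left 1
    simp only [sub_zero, sub_self] at h
    rw [hfun] at h
    exact (intervalIntegrable_iff_integrableOn_Ioc_of_le zero_le_one).1 h.symm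
  -- value of the reflected second piece
  have hK : ∫ x in Ioc (0:ℝ) 1, x ^ (a-1) * Real.log (1-x) * (1-x) ^ b
      = ∫ y in Ioc (0:ℝ) 1, y ^ b * Real.log y * (1-y) ^ (a-1) := by
    rw [← intervalIntegral.integral_of_le zero_le_one,
        ← intervalIntegral.integral_of_le zero_le_one]
    have h := intervalIntegral.integral_comp_sub_left (a := 0) (b := 1)
      (fun y : ℝ => y ^ b * Real.log y * (1-y) ^ (a-1)) 1
    simp only [sub_zero, sub_self] at h
    rw [← h]
    congr 1
    funext x
    simp only [sub_sub_cancel]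
    ring
  -- rewrite the integrand
  rw [intervalIntegral.integral_of_le zero_le_one]
  have heq : EqOn
      (fun x : ℝ => x ^ (a - 1) * (1 - x) ^ (b - 1) *
        (Real.negMulLog x + Real.negMulLog (1 - x)))
      (fun x : ℝ => -(x ^ a * Real.log x * (1-x) ^ (b-1))
        + -(x ^ (a-1) * Real.log (1-x) * (1-x) ^ b)) (Ioc 0 1) := by
    intro x hx
    have hx0 : 0 < x := hx.1
    rcases eq_or_lt_of_le hx.2 with h1 | h1
    · subst h1
      simp [Real.negMulLog, Real.zero_rpow hb.ne']
    · have h1x : 0 < 1 - x := by linarith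
      simp only [Real.negMulLog]
      rw [show x ^ a = x ^ (a-1) * x by
            rw [← Real.rpow_add_one hx0.ne']; congr 1; ring,
          show (1-x) ^ b = (1-x) ^ (b-1) * (1-x) by
            rw [← Real.rpow_add_one h1x.ne']; congr 1; ring]
      ring
  rw [setIntegral_congr_fun measurableSet_Ioc heq,
      show (∫ x in Ioc (0:ℝ) 1, (-(x ^ a * Real.log x * (1-x) ^ (b-1))
          + -(x ^ (a-1) * Real.log (1-x) * (1-x) ^ b)))
        = ∫ x in Ioc (0:ℝ) 1, -((x ^ a * Real.log x * (1-x) ^ (b-1))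
          + (x ^ (a-1) * Real.log (1-x) * (1-x) ^ b)) from by simp only [neg_add],
      integral_neg, integral_add hI1.1 j2, hI1.2, hK, hI2.2]
  -- final arithmetic
  have hΓa : Real.Gamma a ≠ 0 := (Real.Gamma_pos_of_pos ha).ne'
  have hΓb : Real.Gamma b ≠ 0 := (Real.Gamma_pos_of_pos hb).ne'
  have hΓab : Real.Gamma (a+b) ≠ 0 := (Real.Gamma_pos_of_pos hab).ne'
  rw [show a+b+1 = (a+b)+1 from rfl, Real.Gamma_add_one ha.ne', Real.Gamma_add_one hb.ne',
      Real.Gamma_add_one hab.ne']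
  field_simp
  ring
end

section
/- The difference between the digamma function and the logarithm tends to zero at infinity: the function x ↦ ψ(x) − log(x) tends to 0 as x → ∞ (along the atTop filter on ℝ). -/
/-- **Asymptotics of digamma.** The difference `ψ(x) − log x` tends to `0` as
`x → ∞`. -/
theorem digamma_sub_log_tendsto_zero :
    Filter.Tendsto (fun x : ℝ => digamma x - Real.log x) Filter.atTop (nhds 0) := by
  open Real Set Filter in
  have hc : ConvexOn ℝ (Ioi 0) (fun t => log (Gamma t)) := convexOn_log_Gamma
  have h_rec : ∀ x : ℝ, 0 < x → log (Gamma (x + 1)) = log (Gamma x) + log x := fun x hx => by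
    rw [Gamma_add_one hx.ne', log_mul hx.ne' (Gamma_pos_of_pos hx).ne', add_comm]
  have hder : ∀ x : ℝ, 0 < x → DifferentiableAt ℝ (fun t => log (Gamma t)) x := fun x hx => by
    refine ((differentiableAt_Gamma ?_).log (Gamma_ne_zero ?_)) <;>
      exact fun m => ne_of_gt (by have := Nat.cast_nonneg (α := ℝ) m; linarith)
  have hLB : ∀ x : ℝ, 2 ≤ x → log (x - 1) ≤ digamma x := by
    intro x hx
    have h1 : (0:ℝ) < x - 1 := by linarith
    have h3 : log (Gamma x) = log (Gamma (x - 1)) + log (x - 1) := by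
      have := h_rec (x - 1) h1; rwa [sub_add_cancel] at this
    refine (le_of_eq ?_).trans <| hc.slope_le_deriv (mem_Ioi.mpr h1)
      (mem_Ioi.mpr (show (0:ℝ) < x by linarith)) (by linarith) (hder x (by linarith))
    rw [slope_def_field, h3, show x - (x - 1) = (1:ℝ) by ring, div_one, add_sub_cancel_left]
  have hUB : ∀ x : ℝ, 2 ≤ x → digamma x ≤ log x := by
    intro x hx
    have h0 : (0:ℝ) < x := by linarith
    refine (hc.deriv_le_slope (mem_Ioi.mpr h0) (mem_Ioi.mpr (show (0:ℝ) < x + 1 by linarith))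
      (by linarith) (hder x h0)).trans (le_of_eq ?_)
    rw [slope_def_field, show x + 1 - x = (1:ℝ) by ring, div_one, h_rec _ h0,
      add_sub_cancel_left]
  have hlog : Tendsto (fun x : ℝ => log (x - 1) - log x) atTop (nhds 0) := by
    have h1 : Tendsto (fun x : ℝ => (x - 1) / x) atTop (nhds 1) := by
      have : (fun x : ℝ => (x - 1) / x) =ᶠ[atTop] fun x => 1 - 1 / x := by
        filter_upwards [eventually_gt_atTop (0:ℝ)] with x hx
        field_simp
      rw [Filter.tendsto_congr' this]
      have : Tendsto (fun x : ℝ => 1 / x) atTop (nhds 0) := by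
        simpa [one_div] using tendsto_inv_atTop_zero
      simpa using tendsto_const_nhds.sub this
    have h2 : Tendsto (fun x : ℝ => log ((x - 1) / x)) atTop (nhds 0) := by
      have := (Real.continuousAt_log one_ne_zero).tendsto.comp h1
      simpa [Function.comp_def] using this
    refine h2.congr' ?_
    filter_upwards [eventually_gt_atTop (1:ℝ)] with x hx
    rw [log_div (by linarith) (by linarith)]
  refine tendsto_of_tendsto_of_tendsto_of_le_of_le' hlog tendsto_const_nhds ?_ ?_
  · filter_upwards [eventually_ge_atTop (2:ℝ)] with x hx
    have := hLB x hx; linarith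
  · filter_upwards [eventually_ge_atTop (2:ℝ)] with x hx
    have := hUB x hx; linarith
end
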